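/- If g is continuous on a right-neighborhood of 0, twice differentiable at 0, and g(0) = 1, then the discrete-Markov throughput map r(x) = (P_on/θ)·log_e[(1 − p11·g(x))/((1 − p11 − p22)·g(x)² + p22·g(x))] is twice differentiable at 0 with r''(0) = −g''(0)/θ + (1 − η)·(g'(0))²/θ, where η = (1 − p22)(p11 + p22)/((1 − p11)(2 − p11 − p22)). -/

import Mathlib

open Real Set Filter

/-- If `g` is continuous on a right-neighborhood of 0, twice
differentiable (from the right) at 0, and `g 0 = 1`, then the discrete-Markov throughput
map `r(x) = (P_on/θ)·log[(1 − p11·g(x))/((1 − p11 − p22)·g(x)² + p22·g(x))]` is twice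
differentiable at 0 with `r''(0) = −g''(0)/θ + (1 − η)·(g'(0))²/θ`, where
`η = (1 − p22)(p11 + p22)/((1 − p11)(2 − p11 − p22))`. -/
theorem discrete_markov_throughput_second_derivative
    (θ p11 p22 : ℝ) (hθ : 0 < θ)
    (hp11 : p11 ∈ Set.Ico (0 : ℝ) 1) (hp22 : p22 ∈ Set.Icc (0 : ℝ) 1)
    (Pon : ℝ) (hPon : Pon = (1 - p11) / (2 - p11 - p22))
    (g g' : ℝ → ℝ) (g'' : ℝ)
    (ε : ℝ) (hε : 0 < ε) (hgcont : ContinuousOn g (Set.Ico 0 ε))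
    (hg0 : g 0 = 1)
    (hgderiv : ∀ x ∈ Set.Ico 0 ε, HasDerivWithinAt g (g' x) (Set.Ici 0) x)
    (hgderiv2 : HasDerivWithinAt g' g'' (Set.Ici 0) 0)
    (η : ℝ) (hη : η = (1 - p22) * (p11 + p22) / ((1 - p11) * (2 - p11 - p22)))
    (r : ℝ → ℝ)
    (hr : ∀ x, r x = (Pon / θ) * Real.log
      ((1 - p11 * g x) / ((1 - p11 - p22) * (g x) ^ 2 + p22 * g x))) :
    ∃ r' : ℝ → ℝ,
      (∀ᶠ x in nhdsWithin 0 (Set.Ici 0), HasDerivWithinAt r (r' x) (Set.Ici 0) x) ∧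
      HasDerivWithinAt r' (-g'' / θ + (1 - η) * (g' 0) ^ 2 / θ) (Set.Ici 0) 0 := by
  obtain ⟨hp11a, hp11b⟩ := hp11
  obtain ⟨hp22a, hp22b⟩ := hp22
  have hb : (0:ℝ) < 1 - p11 := by linarith
  have hc : (0:ℝ) < 2 - p11 - p22 := by linarith
  have h0ε : (0:ℝ) ∈ Set.Ico 0 ε := ⟨le_rfl, hε⟩
  refine ⟨fun x => (Pon / θ) * ((0 - p11 * g' x) / (1 - p11 * g x) -
      ((1 - p11 - p22) * (2 * g x * g' x) + p22 * g' x) /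
        ((1 - p11 - p22) * g x ^ 2 + p22 * g x)), ?_, ?_⟩
  · -- first derivative holds eventually
    have hcw : ContinuousWithinAt g (Set.Ici 0) 0 := by
      have h1 : ContinuousWithinAt g (Set.Ico 0 ε) 0 := hgcont 0 h0ε
      exact h1.mono_of_mem_nhdsWithin (Ico_mem_nhdsGE h0ε.2)
    have htend : Filter.Tendsto g (nhdsWithin 0 (Set.Ici 0)) (nhds 1) := by
      simpa [ContinuousWithinAt, hg0] using hcw
    have hNt : Filter.Tendsto (fun x => 1 - p11 * g x)
        (nhdsWithin 0 (Set.Ici 0)) (nhds (1 - p11)) := by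
      simpa using (tendsto_const_nhds.sub (htend.const_mul p11))
    have hDt : Filter.Tendsto (fun x => (1 - p11 - p22) * g x ^ 2 + p22 * g x)
        (nhdsWithin 0 (Set.Ici 0)) (nhds (1 - p11)) := by
      have h := ((htend.pow 2).const_mul (1 - p11 - p22)).add (htend.const_mul p22)
      have he : (1 - p11 - p22) * 1 ^ 2 + p22 * 1 = 1 - p11 := by ring
      rw [he] at h
      exact h
    have hev : ∀ᶠ x in nhdsWithin 0 (Set.Ici 0),
        (0 < 1 - p11 * g x ∧ 0 < (1 - p11 - p22) * g x ^ 2 + p22 * g x) ∧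
          x ∈ Set.Ico 0 ε :=
      ((hNt.eventually (eventually_gt_nhds hb)).and
        (hDt.eventually (eventually_gt_nhds hb))).and (Ico_mem_nhdsGE h0ε.2)
    obtain ⟨δ, hδ, hsub⟩ := mem_nhdsGE_iff_exists_Ico_subset.mp hev
    have h0δ : (0:ℝ) ∈ Set.Ico 0 δ := ⟨le_rfl, hδ⟩
    have heq : ∀ y ∈ Set.Ico 0 δ, r y = (Pon / θ) *
        (Real.log (1 - p11 * g y) -
          Real.log ((1 - p11 - p22) * g y ^ 2 + p22 * g y)) := by
      intro y hy
      obtain ⟨⟨hNy, hDy⟩, _⟩ := hsub hy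
      rw [hr y, Real.log_div hNy.ne' hDy.ne']
    filter_upwards [Ico_mem_nhdsGE h0δ.2] with x hx
    obtain ⟨⟨hNx, hDx⟩, hxε⟩ := hsub hx
    have hgx := hgderiv x hxε
    have hN : HasDerivWithinAt (fun y => 1 - p11 * g y) (0 - p11 * g' x)
        (Set.Ici 0) x := (hasDerivWithinAt_const x _ 1).sub (hgx.const_mul p11)
    have hD : HasDerivWithinAt (fun y => (1 - p11 - p22) * g y ^ 2 + p22 * g y)
        ((1 - p11 - p22) * (2 * g x ^ 1 * g' x) + p22 * g' x) (Set.Ici 0) x :=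
      ((hgx.pow 2).const_mul _).add (hgx.const_mul p22)
    have hlogN := (Real.hasDerivAt_log hNx.ne').comp_hasDerivWithinAt x hN
    have hlogD := (Real.hasDerivAt_log hDx.ne').comp_hasDerivWithinAt x hD
    have hf := (hlogN.sub hlogD).const_mul (Pon / θ)
    have hfr : HasDerivWithinAt r
        ((Pon / θ) * ((1 - p11 * g x)⁻¹ * (0 - p11 * g' x) -
          ((1 - p11 - p22) * g x ^ 2 + p22 * g x)⁻¹ *
            ((1 - p11 - p22) * (2 * g x ^ 1 * g' x) + p22 * g' x)))
        (Set.Ici 0) x := by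
      refine hf.congr_of_eventuallyEq ?_ (heq x hx)
      have hmem : Set.Ico 0 δ ∈ nhdsWithin x (Set.Ici 0) := by
        rw [← Set.Ici_inter_Iio]
        exact inter_mem_nhdsWithin _ (Iio_mem_nhds hx.2)
      exact Filter.eventuallyEq_of_mem hmem heq
    convert hfr using 1
    ring
  · -- second derivative at 0
    have hg0d := hgderiv 0 h0ε
    have hNne : 1 - p11 * g 0 ≠ 0 := by rw [hg0]; simpa using hb.ne'
    have hDne : (1 - p11 - p22) * g 0 ^ 2 + p22 * g 0 ≠ 0 := by
      rw [hg0]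
      have : (1 - p11 - p22) * 1 ^ 2 + p22 * 1 = 1 - p11 := by ring
      rw [this]; exact hb.ne'
    have hN0 : HasDerivWithinAt (fun y => 1 - p11 * g y) (0 - p11 * g' 0)
        (Set.Ici 0) 0 := (hasDerivWithinAt_const 0 _ 1).sub (hg0d.const_mul p11)
    have hD0 : HasDerivWithinAt (fun y => (1 - p11 - p22) * g y ^ 2 + p22 * g y)
        ((1 - p11 - p22) * (2 * g 0 ^ 1 * g' 0) + p22 * g' 0) (Set.Ici 0) 0 :=
      ((hg0d.pow 2).const_mul _).add (hg0d.const_mul p22)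
    have hnA : HasDerivWithinAt (fun y => 0 - p11 * g' y) (0 - p11 * g'')
        (Set.Ici 0) 0 := (hasDerivWithinAt_const 0 _ 0).sub (hgderiv2.const_mul p11)
    have hA := hnA.div hN0 hNne
    have hnB : HasDerivWithinAt
        (fun y => (1 - p11 - p22) * (2 * g y * g' y) + p22 * g' y)
        ((1 - p11 - p22) * ((2 * g' 0) * g' 0 + (2 * g 0) * g'') + p22 * g'')
        (Set.Ici 0) 0 :=
      (((hg0d.const_mul 2).mul hgderiv2).const_mul _).add (hgderiv2.const_mul p22)
    have hB := hnB.div hD0 hDne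
    have hfin := (hA.sub hB).const_mul (Pon / θ)
    refine hfin.congr_deriv ?_
    subst hPon hη
    rw [hg0]
    have e1 : (1:ℝ) - p11 * 1 ≠ 0 := by simpa using hb.ne'
    have e2 : (1 - p11 - p22) * (1:ℝ) ^ 2 + p22 * 1 ≠ 0 := by
      have : (1 - p11 - p22) * (1:ℝ) ^ 2 + p22 * 1 = 1 - p11 := by ring
      rw [this]; exact hb.ne'
    field_simp [hb.ne', hc.ne', hθ.ne']
    ring
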